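/- If S_n are nonnegative random variables with S_n → 0 in probability and r_n → ∞, then (1/r_n) log E[(1−min(S_n,1))^{r_n/2}] → 0. -/

import Mathlib

open MeasureTheory Filter

/-- If `S_n ≥ 0` converge to `0` in probability and `r_n → ∞`, then
`(1/r_n) log E[(1 − min(S_n,1))^{r_n/2}] → 0`. -/
theorem log_expectation_tendsto_zero
    {Ω : Type*} [MeasurableSpace Ω] {P : Measure Ω} [IsProbabilityMeasure P]
    (S : ℕ → Ω → ℝ) (hmeas : ∀ n, Measurable (S n)) (hnn : ∀ n, ∀ᵐ ω ∂P, 0 ≤ S n ω)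
    (hprob : ∀ ε : ℝ, 0 < ε →
        Tendsto (fun n => P {ω | ε < |S n ω|}) atTop (nhds 0))
    (r : ℕ → ℝ) (hrpos : ∀ n, 0 < r n) (hr : Tendsto r atTop atTop) :
    Tendsto
      (fun n => (1 / r n) *
        Real.log (∫ ω, (1 - min (S n ω) 1) ^ (r n / 2) ∂P))
      atTop (nhds 0) := by
  have hexp_nonneg : ∀ n, 0 ≤ r n / 2 := fun n => by
    have := hrpos n; positivity
  have hfmeas : ∀ n, Measurable fun ω => (1 - min (S n ω) 1) ^ (r n / 2) := by
    intro n
    exact (Real.continuous_rpow_const (hexp_nonneg n)).measurable.comp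
      (measurable_const.sub ((hmeas n).min measurable_const))
  -- a.e. bounds on the integrand
  have hbounds : ∀ n, ∀ᵐ ω ∂P,
      0 ≤ (1 - min (S n ω) 1) ^ (r n / 2) ∧ (1 - min (S n ω) 1) ^ (r n / 2) ≤ 1 := by
    intro n
    filter_upwards [hnn n] with ω hω
    have hb0 : 0 ≤ 1 - min (S n ω) 1 := by
      have : min (S n ω) 1 ≤ 1 := min_le_right _ _
      linarith
    have hb1 : 1 - min (S n ω) 1 ≤ 1 := by
      have : 0 ≤ min (S n ω) 1 := le_min hω zero_le_one
      linarith
    exact ⟨Real.rpow_nonneg hb0 _, Real.rpow_le_one hb0 hb1 (hexp_nonneg n)⟩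
  have hint : ∀ n, Integrable (fun ω => (1 - min (S n ω) 1) ^ (r n / 2)) P := by
    intro n
    refine (integrable_const (1 : ℝ)).mono' (hfmeas n).aestronglyMeasurable ?_
    filter_upwards [hbounds n] with ω hω
    rw [Real.norm_eq_abs, abs_of_nonneg hω.1]
    exact hω.2
  have hI_nonneg : ∀ n, 0 ≤ ∫ ω, (1 - min (S n ω) 1) ^ (r n / 2) ∂P := by
    intro n
    exact integral_nonneg_of_ae ((hbounds n).mono fun ω h => h.1)
  have hI_le_one : ∀ n, (∫ ω, (1 - min (S n ω) 1) ^ (r n / 2) ∂P) ≤ 1 := by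
    intro n
    calc (∫ ω, (1 - min (S n ω) 1) ^ (r n / 2) ∂P)
        ≤ ∫ _, (1 : ℝ) ∂P :=
          integral_mono_ae (hint n) (integrable_const 1) ((hbounds n).mono fun ω h => h.2)
      _ = 1 := by simp
  rw [NormedAddCommGroup.tendsto_nhds_zero]
  intro δ hδ
  set ε : ℝ := 1 - Real.exp (-δ) with hε_def
  have hε0 : 0 < ε := by
    have : Real.exp (-δ) < 1 := Real.exp_lt_one_iff.mpr (by linarith)
    simp only [hε_def]; linarith
  have hε1 : ε < 1 := by
    have : 0 < Real.exp (-δ) := Real.exp_pos _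
    simp only [hε_def]; linarith
  -- eventual bound on the "bad" probability
  have hE1 : ∀ᶠ n in atTop, P {ω | ε < |S n ω|} < 1 / 2 :=
    (hprob ε hε0).eventually_lt_const (by norm_num)
  -- eventual bound (1/r n) * log (1/2) > -δ/2
  have htends : Tendsto (fun n => (1 / r n) * Real.log (1 / 2)) atTop (nhds 0) := by
    have h1 : Tendsto (fun n => 1 / r n) atTop (nhds 0) := by
      simp only [one_div]; exact hr.inv_tendsto_atTop
    simpa using h1.mul_const (Real.log (1 / 2))
  have hE2 : ∀ᶠ n in atTop, -(δ / 2) < (1 / r n) * Real.log (1 / 2) :=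
    htends.eventually_const_lt (by linarith)
  filter_upwards [hE1, hE2] with n h1 h2
  set A : Set Ω := {ω | S n ω ≤ ε} with hA_def
  have hA_meas : MeasurableSet A := measurableSet_le (hmeas n) measurable_const
  -- lower bound on P A
  have hPA : (1 / 2 : ENNReal) ≤ P A := by
    have hcompl : P Aᶜ ≤ P {ω | ε < |S n ω|} := by
      apply measure_mono
      intro ω hω
      simp only [hA_def, Set.mem_compl_iff, Set.mem_setOf_eq, not_le] at hω ⊢
      exact lt_of_lt_of_le hω (le_abs_self _)
    have h := prob_compl_eq_one_sub hA_meas (μ := P)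
    have hPA' : P A = 1 - P Aᶜ := by
      rw [h]
      rw [ENNReal.sub_sub_cancel ENNReal.one_ne_top prob_le_one]
    rw [hPA']
    calc (1 / 2 : ENNReal) = 1 - 1 / 2 := (ENNReal.sub_half ENNReal.one_ne_top).symm
      _ ≤ 1 - P Aᶜ := tsub_le_tsub_left (le_trans hcompl h1.le) 1
  have hp_half : (1 / 2 : ℝ) ≤ (P A).toReal := by
    have := ENNReal.toReal_mono (measure_ne_top P A) hPA
    simpa using this
  set p : ℝ := (P A).toReal with hp_def
  have hp_pos : 0 < p := lt_of_lt_of_le (by norm_num) hp_half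
  set c : ℝ := Real.exp (-δ) ^ (r n / 2) with hc_def
  have hc_pos : 0 < c := Real.rpow_pos_of_pos (Real.exp_pos _) _
  -- integral lower bound
  have hlow : p * c ≤ ∫ ω, (1 - min (S n ω) 1) ^ (r n / 2) ∂P := by
    have hind : (∫ ω, A.indicator (fun _ => c) ω ∂P) = p * c := by
      rw [integral_indicator_const c hA_meas]
      simp [hp_def, smul_eq_mul]
      exact Or.inl rfl
    rw [← hind]
    refine integral_mono_ae ((integrable_const c).indicator hA_meas) (hint n) ?_
    filter_upwards [hnn n] with ω hω
    by_cases hωA : ω ∈ A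
    · rw [Set.indicator_of_mem hωA]
      have hSε : min (S n ω) 1 ≤ ε := le_trans (min_le_left _ _) hωA
      have hbase : Real.exp (-δ) ≤ 1 - min (S n ω) 1 := by
        simp only [hε_def] at hSε; linarith
      exact Real.rpow_le_rpow (Real.exp_pos _).le hbase (hexp_nonneg n)
    · rw [Set.indicator_of_notMem hωA]
      have hb0 : 0 ≤ 1 - min (S n ω) 1 := by
        have : min (S n ω) 1 ≤ 1 := min_le_right _ _
        linarith
      exact Real.rpow_nonneg hb0 _
  set I : ℝ := ∫ ω, (1 - min (S n ω) 1) ^ (r n / 2) ∂P with hI_def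
  have hI_pos : 0 < I := lt_of_lt_of_le (by positivity) hlow
  have hrn : 0 < r n := hrpos n
  -- log lower bound
  have hlogI : Real.log (p * c) ≤ Real.log I := Real.log_le_log (by positivity) hlow
  have hlogpc : Real.log (p * c) = Real.log p + (r n / 2) * (-δ) := by
    rw [Real.log_mul hp_pos.ne' hc_pos.ne', hc_def, Real.log_rpow (Real.exp_pos _),
      Real.log_exp]
  have hlogp : Real.log (1 / 2) ≤ Real.log p := Real.log_le_log (by norm_num) hp_half
  -- upper bound: log I ≤ 0
  have hlogI_nonpos : Real.log I ≤ 0 := Real.log_nonpos (hI_nonneg n) (hI_le_one n)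
  have hfu : (1 / r n) * Real.log I ≤ 0 :=
    mul_nonpos_of_nonneg_of_nonpos (by positivity) hlogI_nonpos
  have hfl : -δ < (1 / r n) * Real.log I := by
    have h3 : (1 / r n) * Real.log (p * c) ≤ (1 / r n) * Real.log I :=
      mul_le_mul_of_nonneg_left hlogI (by positivity)
    have h4 : (1 / r n) * Real.log (p * c)
        = (1 / r n) * Real.log p + -(δ / 2) := by
      rw [hlogpc]; field_simp
    have h5 : (1 / r n) * Real.log (1 / 2) ≤ (1 / r n) * Real.log p :=
      mul_le_mul_of_nonneg_left hlogp (by positivity)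
    nlinarith
  rw [Real.norm_eq_abs, abs_lt]
  exact ⟨hfl, lt_of_le_of_lt hfu hδ⟩
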